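/- Let L be a complete lattice with its Scott topology and the join-cone structure (x+y = x∨y, r·x = x for r>0, ⊥ for r=0). For every continuous valuation ν on L, the supremum of the support of ν is a barycentre of ν, where the support of ν is the complement of the largest open set of ν-measure zero. -/

import Mathlib

open Set ENNReal NNReal TopologicalSpace MeasureTheory
open scoped Classical

/-- A continuous valuation on a topological space `X`: a strict, monotone, modular,
Scott-continuous map from the open sets of `X` to `ℝ≥0∞`. -/
structure ContValuation (X : Type*) [TopologicalSpace X] where
  toFun : Opens X → ℝ≥0∞
  strict' : toFun ⊥ = 0
  mono' : ∀ U V : Opens X, U ≤ V → toFun U ≤ toFun V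
  modular' : ∀ U V : Opens X, toFun U + toFun V = toFun (U ⊔ V) + toFun (U ⊓ V)
  scott' : ∀ S : Set (Opens X), S.Nonempty → DirectedOn (· ≤ ·) S →
    toFun (sSup S) = ⨆ U ∈ S, toFun U

/-- The stochastic order on continuous valuations: pointwise order on open sets. -/
def stochLE {X : Type*} [TopologicalSpace X] (μ ν : ContValuation X) : Prop :=
  ∀ U : Opens X, μ.toFun U ≤ ν.toFun U

/-- The Choquet integral `∫ h dμ = ∫₀^∞ μ(h⁻¹(r,∞]) dr` of a lower semicontinuous
function `h : X → ℝ≥0∞` with respect to a continuous valuation `μ`. -/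
noncomputable def choquet {X : Type*} [TopologicalSpace X] (μ : ContValuation X)
    (h : X → ℝ≥0∞) (hh : LowerSemicontinuous h) : ℝ≥0∞ :=
  ∫⁻ r in Set.Ioi (0 : ℝ), μ.toFun ⟨h ⁻¹' Set.Ioi (ENNReal.ofReal r), hh.isOpen_preimage _⟩

/-- Linearity of a functional `Λ : L → [0,∞]` with respect to the join-cone structure on
a complete lattice `L` (`x + y = x ⊔ y`, `r · x = x` if `r > 0` and `⊥` if `r = 0`):
`Λ(r·x + s·y) = r·Λ(x) + s·Λ(y)`. -/
def JoinConeLinear {L : Type*} [CompleteLattice L] (Λ : L → ℝ≥0∞) : Prop :=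
  ∀ (r s : ℝ≥0) (x y : L),
    Λ ((if r = 0 then ⊥ else x) ⊔ (if s = 0 then ⊥ else y)) =
      (r : ℝ≥0∞) * Λ x + (s : ℝ≥0∞) * Λ y

/-- The support of a continuous valuation `ν`: the complement of the largest open set of
`ν`-measure zero. -/
def ContValuation.supp {X : Type*} [TopologicalSpace X] (ν : ContValuation X) : Set X :=
  (↑(sSup {U : Opens X | ν.toFun U = 0}) : Set X)ᶜ

/-- Let `L` be a complete lattice with its Scott topology and the join-cone structure.
For every continuous valuation `ν` on `L`, the supremum of the support of `ν` is a
barycentre of `ν`: `Λ(⋁ supp ν) = ∫ Λ dν` for every lower semicontinuous functional `Λ`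
that is linear for the join-cone structure. -/
theorem joinCone_sSup_supp_barycentre
    (L : Type*) [CompleteLattice L] [TopologicalSpace L] [Topology.IsScott L Set.univ]
    (ν : ContValuation L) :
    ∀ (Λ : L → ℝ≥0∞) (hΛ : LowerSemicontinuous Λ), JoinConeLinear Λ →
      Λ (sSup ν.supp) = choquet ν Λ hΛ := by
  intro Λ hΛ hlin
  have hbot : Λ ⊥ = 0 := by simpa using hlin 0 0 ⊥ ⊥
  have hadd : ∀ x y : L, Λ (x ⊔ y) = Λ x + Λ y := by
    intro x y; simpa using hlin 1 1 x y
  have hmono : ∀ x y : L, x ≤ y → Λ x ≤ Λ y := by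
    intro x y hxy
    have h : Λ y = Λ x + Λ y := by rw [← hadd, sup_eq_right.mpr hxy]
    rw [h]; exact le_self_add
  have hval : ∀ x : L, Λ x = 0 ∨ Λ x = ⊤ := by
    intro x
    by_contra hc
    push_neg at hc
    have h := hadd x x
    rw [sup_idem] at h
    exact absurd h (ne_of_lt (ENNReal.lt_add_right hc.2 hc.1))
  set U : Set L := Λ ⁻¹' Set.Ioi 0 with hUdef
  have hUopen : IsOpen U := hΛ.isOpen_preimage 0
  have hmemU : ∀ x : L, x ∈ U ↔ Λ x = ⊤ := by
    intro x
    constructor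
    · intro hx
      rcases hval x with h | h
      · exact absurd (show (0:ℝ≥0∞) < Λ x from hx) (by simp [h])
      · exact h
    · intro hx
      show (0:ℝ≥0∞) < Λ x
      rw [hx]; exact ENNReal.zero_lt_top
  have hnotU : ∀ x : L, x ∉ U ↔ Λ x = 0 := by
    intro x
    rw [hmemU]
    rcases hval x with h | h <;> simp [h]
  -- the largest null open set
  set W : Opens L := sSup {V : Opens L | ν.toFun V = 0} with hWdef
  have hνW : ν.toFun W = 0 := by
    have hne : ({V : Opens L | ν.toFun V = 0} : Set (Opens L)).Nonempty :=
      ⟨⊥, ν.strict'⟩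
    have hdir : DirectedOn (· ≤ ·) {V : Opens L | ν.toFun V = 0} := by
      intro a ha b hb
      refine ⟨a ⊔ b, ?_, le_sup_left, le_sup_right⟩
      have := ν.modular' a b
      have h1 : ν.toFun (a ⊔ b) ≤ ν.toFun a + ν.toFun b := by
        rw [this]; exact le_self_add
      have : ν.toFun (a ⊔ b) ≤ 0 := by
        rw [ha, hb] at h1; simpa using h1
      simpa using this
    rw [hWdef, ν.scott' _ hne hdir]
    rw [ENNReal.iSup_eq_zero]
    intro V
    rw [ENNReal.iSup_eq_zero]
    intro hV
    exact hV
  -- value of the Choquet integral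
  have hch : choquet ν Λ hΛ = ν.toFun ⟨U, hUopen⟩ * ⊤ := by
    unfold choquet
    rw [setLIntegral_congr_fun (f := fun r : ℝ =>
        ν.toFun ⟨Λ ⁻¹' Set.Ioi (ENNReal.ofReal r), hΛ.isOpen_preimage _⟩)
        (g := fun _ => ν.toFun ⟨U, hUopen⟩) measurableSet_Ioi ?_]
    · rw [setLIntegral_const, Real.volume_Ioi]
    · refine fun r hr => ?_
      refine congrArg ν.toFun (Opens.ext ?_)
      ext x
      simp only [Opens.coe_mk, Set.mem_preimage, Set.mem_Ioi]
      constructor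
      · intro h
        exact lt_trans (by simpa using hr) h
      · intro h
        have hx : Λ x = ⊤ := (hmemU x).mp h
        rw [hx]
        exact ENNReal.ofReal_lt_top
  by_cases hν : ν.toFun ⟨U, hUopen⟩ = 0
  · -- barycentre has Λ = 0 and integral is 0
    have hUW : U ⊆ (W : Set L) := by
      have : (⟨U, hUopen⟩ : Opens L) ≤ W := le_sSup hν
      exact this
    have hsupp : ν.supp ⊆ Uᶜ := by
      intro x hx
      exact fun hxU => hx (hUW hxU)
    -- directify: finite sups of elements of the support
    set D : Set L := {x | ∃ t : Finset L, ↑t ⊆ ν.supp ∧ x = t.sup id} with hDdef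
    have hDsub : D ⊆ Uᶜ := by
      rintro x ⟨t, ht, rfl⟩
      rw [Set.mem_compl_iff, hnotU]
      induction t using Finset.induction_on with
      | empty => simpa using hbot
      | @insert a t ha ih =>
        rw [Finset.sup_insert, hadd, id,
          ih (fun y hy => ht (Finset.mem_insert_of_mem hy))]
        have : a ∈ ν.supp := ht (Finset.mem_insert_self a t)
        have := (hnotU a).mp (fun h => hsupp this h)
        simp [this]
    have hDne : D.Nonempty := ⟨⊥, ∅, by simp⟩
    have hDdir : DirectedOn (· ≤ ·) D := by
      rintro x ⟨t, ht, rfl⟩ y ⟨s, hs, rfl⟩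
      refine ⟨(t ∪ s).sup id, ⟨t ∪ s, ?_, rfl⟩, ?_, ?_⟩
      · intro a ha
        rcases Finset.mem_union.mp ha with h | h
        · exact ht h
        · exact hs h
      · exact Finset.sup_mono Finset.subset_union_left
      · exact Finset.sup_mono Finset.subset_union_right
    have hsSupD : sSup D = sSup ν.supp := by
      apply le_antisymm
      · apply sSup_le
        rintro x ⟨t, ht, rfl⟩
        exact Finset.sup_le fun a ha => le_sSup (ht ha)
      · apply sSup_le
        intro x hx
        exact le_sSup ⟨{x}, by simpa using hx, by simp⟩
    have hclosed : DirSupClosed (Uᶜ) :=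
      Topology.IsScott.dirSupClosed_of_isClosed hUopen.isClosed_compl
    have : sSup D ∈ Uᶜ :=
      (dirSupClosed_iff_forall_sSup.mp hclosed) hDsub hDne hDdir
    rw [hsSupD] at this
    rw [(hnotU _).mp this, hch, hν, zero_mul]
  · -- barycentre has Λ = ⊤ and integral is ⊤
    rw [hch, ENNReal.mul_top hν]
    rcases hval (sSup ν.supp) with h | h
    · exfalso
      have hsub : U ⊆ (W : Set L) := by
        intro x hx
        by_contra hxW
        have hxsupp : x ∈ ν.supp := hxW
        have : Λ x ≤ Λ (sSup ν.supp) := hmono _ _ (le_sSup hxsupp)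
        rw [h] at this
        have : Λ x = 0 := le_antisymm this zero_le
        exact absurd ((hmemU x).mp hx) (by simp [this])
      have : ν.toFun ⟨U, hUopen⟩ ≤ ν.toFun W := ν.mono' _ _ hsub
      rw [hνW] at this
      exact hν (le_antisymm this zero_le)
    · exact h
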